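/- Let A: X → X* be continuous, linear, monotone, and symmetric, with closed range, and let F: X×X* → (−∞,+∞]. Then F = 𝒞_A (where 𝒞_A = q_A ⊕ q_A*) if and only if the following three conditions hold: (i) F is autoconjugate; (ii) F(0,0) = 0; (iii) F(x,Ay) = F(y,Ax) for all (x,y) ∈ X×X. -/

import Mathlib

noncomputable section
open scoped Classical
open Filter Topology

/-- The Fenchel conjugate of `F : X × X* → (-∞,+∞]`, as a function on `X* × X`:
`F*(x*,x) = sup_{(y,y*)} (⟨y,x*⟩ + ⟨x,y*⟩ - F(y,y*))`. -/
def conj2 {X : Type*} [NormedAddCommGroup X] [NormedSpace ℝ X]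
    (F : X × (X →L[ℝ] ℝ) → EReal) : (X →L[ℝ] ℝ) × X → EReal :=
  fun p => ⨆ q : X × (X →L[ℝ] ℝ), ((p.1 q.1 + q.2 p.2 : ℝ) : EReal) - F q

/-- `F` is autoconjugate: `F*(x*,x) = F(x,x*)` for all `(x,x*)`. -/
def Autoconjugate {X : Type*} [NormedAddCommGroup X] [NormedSpace ℝ X]
    (F : X × (X →L[ℝ] ℝ) → EReal) : Prop :=
  ∀ (x : X) (x' : X →L[ℝ] ℝ), conj2 F (x', x) = F (x, x')

/-- `F` is a representer for the set-valued operator `A : X ⇉ X*`: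
`gra A = {(x,x*) : F(x,x*) = ⟨x,x*⟩}`. -/
def IsRepresenter {X : Type*} [NormedAddCommGroup X] [NormedSpace ℝ X]
    (F : X × (X →L[ℝ] ℝ) → EReal) (A : X → Set (X →L[ℝ] ℝ)) : Prop :=
  ∀ (x : X) (x' : X →L[ℝ] ℝ), x' ∈ A x ↔ F (x, x') = ((x' x : ℝ) : EReal)

/-- A set-valued operator `A : X ⇉ X*` is monotone. -/
def MonotoneOp {X : Type*} [NormedAddCommGroup X] [NormedSpace ℝ X]
    (A : X → Set (X →L[ℝ] ℝ)) : Prop :=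
  ∀ ⦃x y : X⦄ ⦃x' y' : X →L[ℝ] ℝ⦄, x' ∈ A x → y' ∈ A y → 0 ≤ (x' - y') (x - y)

/-- A set-valued operator is maximal monotone if it is monotone and admits no proper
monotone extension (in the sense of graph inclusion). -/
def MaximalMonotoneOp {X : Type*} [NormedAddCommGroup X] [NormedSpace ℝ X]
    (A : X → Set (X →L[ℝ] ℝ)) : Prop :=
  MonotoneOp A ∧ ∀ B : X → Set (X →L[ℝ] ℝ), MonotoneOp B → (∀ x, A x ⊆ B x) → B = A

/-- The quadratic function `q_A(x) = ½⟨x,Ax⟩` associated with a continuous linear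
`A : X → X*`. -/
def qF {X : Type*} [NormedAddCommGroup X] [NormedSpace ℝ X]
    (A : X →L[ℝ] X →L[ℝ] ℝ) : X → ℝ :=
  fun x => (1 / 2) * A x x

/-- The Fenchel conjugate of a real-valued function `φ : X → ℝ`, as an `EReal`-valued
function on `X*`: `φ*(x*) = sup_y (⟨y,x*⟩ - φ(y))`. -/
def legendre {X : Type*} [NormedAddCommGroup X] [NormedSpace ℝ X]
    (φ : X → ℝ) : (X →L[ℝ] ℝ) → EReal :=
  fun x' => ⨆ y : X, ((x' y - φ y : ℝ) : EReal)

/-- The symmetric part `A₊ = ½A + ½A*` of a continuous linear `A : X → X*`, where the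
adjoint (restricted to `X`) is `A.flip`. -/
def symPart {X : Type*} [NormedAddCommGroup X] [NormedSpace ℝ X]
    (A : X →L[ℝ] X →L[ℝ] ℝ) : X →L[ℝ] X →L[ℝ] ℝ :=
  (1 / 2 : ℝ) • (A + A.flip)

/-- The antisymmetric part `A∘ = ½A - ½A*` of a continuous linear `A : X → X*`. -/
def antiPart {X : Type*} [NormedAddCommGroup X] [NormedSpace ℝ X]
    (A : X →L[ℝ] X →L[ℝ] ℝ) : X →L[ℝ] X →L[ℝ] ℝ :=
  (1 / 2 : ℝ) • (A - A.flip)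

/-- The Fitzpatrick function of a continuous linear `A : X → X*`:
`F_A(x,x*) = sup_y (⟨x,Ay⟩ + ⟨y,x*⟩ - ⟨y,Ay⟩)`. -/
def fitz {X : Type*} [NormedAddCommGroup X] [NormedSpace ℝ X]
    (A : X →L[ℝ] X →L[ℝ] ℝ) : X × (X →L[ℝ] ℝ) → EReal :=
  fun p => ⨆ y : X, ((A y p.1 + p.2 y - A y y : ℝ) : EReal)

/-! ### Auxiliary lemmas -/


lemma ereal_le_of_forall_real_lt_le {c x : EReal} (h : ∀ r : ℝ, (r:EReal) < c → (r:EReal) ≤ x) :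
    c ≤ x := by
  induction c with
  | bot => exact bot_le
  | coe t =>
    induction x with
    | bot =>
      have := h (t - 1) (by exact_mod_cast sub_one_lt t)
      exact absurd (le_bot_iff.mp this) (EReal.coe_ne_bot _)
    | coe v =>
      by_contra hvt
      push_neg at hvt
      have hvt' : v < t := by exact_mod_cast hvt
      obtain ⟨r, hr1, hr2⟩ := exists_between hvt'
      have := h r (by exact_mod_cast hr2)
      exact absurd (by exact_mod_cast this) (not_le.2 hr1)
    | top => exact le_top
  | top =>
    rw [top_le_iff, EReal.eq_top_iff_forall_lt]
    intro y
    induction x with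
    | bot =>
      exact absurd (le_bot_iff.mp (h y (EReal.coe_lt_top y))) (EReal.coe_ne_bot _)
    | coe v =>
      have h2 := h (v+1) (EReal.coe_lt_top (v+1))
      have : (v:ℝ) + 1 ≤ v := by exact_mod_cast h2
      linarith
    | top => exact EReal.coe_lt_top y

section Main

variable {X : Type*} [NormedAddCommGroup X] [NormedSpace ℝ X]
variable (A : X →L[ℝ] X →L[ℝ] ℝ)

lemma qF_zero : qF A 0 = 0 := by simp [qF]

lemma qF_smul (t : ℝ) (y : X) : qF A (t • y) = t^2 * qF A y := by
  simp [qF, map_smul]; ring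

variable {A}

lemma pairing_le (hmono : ∀ x : X, 0 ≤ A x x) (hsym : ∀ x y : X, A x y = A y x)
    (z y : X) : A z y ≤ qF A z + qF A y := by
  have h0 := hmono (z - y)
  have hexp : A (z - y) (z - y) = A z z - 2 * A z y + A y y := by
    simp only [map_sub, ContinuousLinearMap.sub_apply]
    rw [hsym y z]; ring
  simp only [qF]
  nlinarith [h0, hexp]

lemma qF_nonneg (hmono : ∀ x : X, 0 ≤ A x x) (x : X) : 0 ≤ qF A x := by
  have := hmono x; simp [qF]; linarith

lemma legendre_ge (φ : X → ℝ) (x' : X →L[ℝ] ℝ) (x : X) :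
    ((x' x - φ x : ℝ) : EReal) ≤ legendre φ x' :=
  le_iSup (fun y => ((x' y - φ y : ℝ) : EReal)) x

lemma legendre_nonneg (x' : X →L[ℝ] ℝ) : (0:EReal) ≤ legendre (qF A) x' := by
  have := legendre_ge (qF A) x' 0
  simpa [qF_zero A] using this

lemma legendre_A (hmono : ∀ x : X, 0 ≤ A x x) (hsym : ∀ x y : X, A x y = A y x)
    (y : X) : legendre (qF A) (A y) = ((qF A y : ℝ) : EReal) := by
  apply le_antisymm
  · apply iSup_le
    intro z
    rw [EReal.coe_le_coe_iff]
    have h1 : A y z = A z y := hsym y z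
    have := pairing_le hmono hsym z y
    linarith
  · refine le_iSup_of_le y (le_of_eq ?_)
    congr 1
    simp [qF]; ring

lemma legendre_zero (hmono : ∀ x : X, 0 ≤ A x x) : legendre (qF A) (0 : X →L[ℝ] ℝ) = 0 := by
  apply le_antisymm
  · apply iSup_le
    intro z
    have := qF_nonneg hmono z
    have : ((0:ℝ) - qF A z : ℝ) ≤ 0 := by linarith
    exact_mod_cast (by exact_mod_cast this : (((0:X→L[ℝ]ℝ) z - qF A z : ℝ):EReal) ≤ ((0:ℝ):EReal))
  · exact legendre_nonneg 0

/-- Separation: a functional x' outside the closed range gives y₀ with A y₀ = 0, x' y₀ = 1. -/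
lemma exists_y0 (hrefl : Function.Surjective (NormedSpace.inclusionInDoubleDual ℝ X))
    (hsym : ∀ x y : X, A x y = A y x)
    (hran : IsClosed (Set.range A : Set (X →L[ℝ] ℝ)))
    {x' : X →L[ℝ] ℝ} (hx' : x' ∉ Set.range A) :
    ∃ y0 : X, A y0 = 0 ∧ x' y0 = 1 := by
  have hconv : Convex ℝ (Set.range (A : X → X →L[ℝ] ℝ)) := by
    rintro _ ⟨u, rfl⟩ _ ⟨v, rfl⟩ s t _ _ _
    exact ⟨s • u + t • v, by simp [map_add, map_smul]⟩
  obtain ⟨f, u, hfu, hux⟩ := geometric_hahn_banach_closed_point hconv hran hx'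
  have hf0 : ∀ z : X, f (A z) = 0 := by
    intro z
    by_contra hz
    have ht : ∀ t : ℝ, t * f (A z) < u := by
      intro t
      have := hfu (A (t • z)) ⟨t • z, rfl⟩
      simpa [map_smul] using this
    have := ht ((u + 1) / f (A z))
    rw [div_mul_cancel₀ _ hz] at this
    linarith
  have hu0 : 0 < u := by
    have := hfu 0 ⟨0, by simp⟩
    simpa using this
  have hfx : 0 < f x' := lt_trans hu0 hux
  obtain ⟨y1, hy1⟩ := hrefl f
  have hy1' : ∀ w : X →L[ℝ] ℝ, w y1 = f w := fun w => by
    rw [← hy1]; rfl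
  have hAy1 : A y1 = 0 := by
    ext z
    have : A z y1 = 0 := by rw [hy1' (A z)]; exact hf0 z
    simpa [hsym y1 z] using this
  refine ⟨(f x')⁻¹ • y1, by rw [map_smul, hAy1, smul_zero], ?_⟩
  rw [map_smul]
  rw [hy1' x']
  simp [inv_mul_cancel₀ (ne_of_gt hfx)]

lemma legendre_top (hrefl : Function.Surjective (NormedSpace.inclusionInDoubleDual ℝ X))
    (hsym : ∀ x y : X, A x y = A y x)
    (hran : IsClosed (Set.range A : Set (X →L[ℝ] ℝ)))
    {x' : X →L[ℝ] ℝ} (hx' : x' ∉ Set.range A) :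
    legendre (qF A) x' = ⊤ := by
  obtain ⟨y0, hAy0, hxy0⟩ := exists_y0 hrefl hsym hran hx'
  rw [EReal.eq_top_iff_forall_lt]
  intro r
  refine lt_of_lt_of_le ?_ (le_iSup _ ((r+1) • y0))
  have hq : qF A ((r+1) • y0) = 0 := by
    rw [qF_smul]
    simp [qF, hAy0]
  rw [map_smul, hxy0, hq]
  simp only [smul_eq_mul, mul_one, sub_zero]
  exact_mod_cast (lt_add_one r)

end Main

/-! conjugation is antitone -/
lemma conj2_mono {X : Type*} [NormedAddCommGroup X] [NormedSpace ℝ X]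
    {F G : X × (X →L[ℝ] ℝ) → EReal} (h : ∀ p, G p ≤ F p) (p : (X →L[ℝ] ℝ) × X) :
    conj2 F p ≤ conj2 G p :=
  iSup_mono fun q => EReal.sub_le_sub le_rfl (h q)

section CAuto

variable {X : Type*} [NormedAddCommGroup X] [NormedSpace ℝ X]
variable {A : X →L[ℝ] X →L[ℝ] ℝ}

/-- The candidate function `C = q_A ⊕ q_A*`. -/
def Cfun (A : X →L[ℝ] X →L[ℝ] ℝ) : X × (X →L[ℝ] ℝ) → EReal :=
  fun p => ((qF A p.1 : ℝ) : EReal) + legendre (qF A) p.2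

lemma Cfun_ne_bot (p : X × (X →L[ℝ] ℝ)) : Cfun A p ≠ ⊥ := by
  have h := legendre_nonneg (A := A) p.2
  intro hc
  rw [Cfun] at hc
  rcases EReal.add_eq_bot_iff.1 hc with h1 | h2
  · exact EReal.coe_ne_bot _ h1
  · rw [h2] at h; exact absurd h (by simp)

lemma Cfun_autoconj (hmono : ∀ x : X, 0 ≤ A x x) (hsym : ∀ x y : X, A x y = A y x) :
    Autoconjugate (Cfun A) := by
  intro x x'
  apply le_antisymm
  · -- conj2 C (x',x) ≤ C (x,x')
    apply iSup_le
    rintro ⟨u, u'⟩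
    rcases eq_or_ne (legendre (qF A) u') ⊤ with htop | hne
    · have h1 : Cfun A (u, u') = ⊤ := by
        rw [Cfun]; simp only; rw [htop, EReal.add_top_of_ne_bot (EReal.coe_ne_bot _)]
      rw [h1]
      simp
    · have hbot : legendre (qF A) u' ≠ ⊥ := fun hc => by
        have := legendre_nonneg (A := A) u'; rw [hc] at this; exact absurd this (by simp)
      obtain ⟨s, hs⟩ : ∃ s : ℝ, legendre (qF A) u' = (s : EReal) := by
        lift (legendre (qF A) u') to ℝ using ⟨hne, hbot⟩ with s hs
        exact ⟨s, rfl⟩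
      have hsx : u' x - qF A x ≤ s := by
        have := legendre_ge (qF A) u' x
        rw [hs] at this
        exact_mod_cast this
      have hterm : ((x' u + u' x : ℝ) : EReal) - Cfun A (u, u')
          = (((x' u - qF A u) : ℝ) : EReal) + ((u' x - s : ℝ) : EReal) := by
        rw [Cfun]; simp only; rw [hs]
        norm_cast
        ring_nf
      rw [hterm, Cfun]
      simp only
      rw [add_comm ((qF A x : ℝ) : EReal) (legendre (qF A) x')]
      exact add_le_add (legendre_ge (qF A) x' u) (by exact_mod_cast (by linarith : u' x - s ≤ qF A x))
  · -- C (x,x') ≤ conj2 C (x',x)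
    have key : ∀ u : X, ((((x' u - qF A u) + qF A x : ℝ)) : EReal) ≤ conj2 (Cfun A) (x', x) := by
      intro u
      refine le_trans (le_of_eq ?_) (le_iSup _ (u, A x))
      rw [Cfun]
      simp only
      rw [legendre_A hmono hsym x]
      have hAxx : A x x = 2 * qF A x := by rw [qF]; ring
      rw [hAxx]
      norm_cast
      ring_nf
    apply ereal_le_of_forall_real_lt_le
    intro r hr
    have hlt : ((r - qF A x : ℝ) : EReal) < legendre (qF A) x' := by
      rcases eq_or_ne (legendre (qF A) x') ⊤ with htop | hne
      · rw [htop]; exact EReal.coe_lt_top _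
      · have hbot : legendre (qF A) x' ≠ ⊥ := fun hc => by
          have := legendre_nonneg (A := A) x'; rw [hc] at this; exact absurd this (by simp)
        obtain ⟨s, hs⟩ : ∃ s : ℝ, legendre (qF A) x' = (s : EReal) := by
          lift (legendre (qF A) x') to ℝ using ⟨hne, hbot⟩ with s
          exact ⟨s, rfl⟩
        rw [Cfun] at hr
        simp only at hr
        rw [hs] at hr ⊢
        have : r < qF A x + s := by exact_mod_cast hr
        exact_mod_cast (by linarith : r - qF A x < s)
    rw [legendre, lt_iSup_iff] at hlt
    obtain ⟨u, hu⟩ := hlt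
    have hu' : r - qF A x < x' u - qF A u := by exact_mod_cast hu
    refine le_trans ?_ (key u)
    exact_mod_cast (by linarith : r ≤ (x' u - qF A u) + qF A x)

end CAuto


/-- Theorem 4.4. Let `A : X → X*` be continuous, linear, monotone and
symmetric with closed range. Then `F = 𝒞_A = q_A ⊕ q_A*` if and only if `F` is
autoconjugate, `F(0,0) = 0`, and `F(x,Ay) = F(y,Ax)` for all `x,y`. -/
theorem stmt12 {X : Type*} [NormedAddCommGroup X] [NormedSpace ℝ X] [CompleteSpace X]
    (hrefl : Function.Surjective (NormedSpace.inclusionInDoubleDual ℝ X))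
    (A : X →L[ℝ] X →L[ℝ] ℝ)
    (hmono : ∀ x : X, 0 ≤ A x x)
    (hsym : ∀ x y : X, A x y = A y x)
    (hran : IsClosed (Set.range A : Set (X →L[ℝ] ℝ)))
    (F : X × (X →L[ℝ] ℝ) → EReal)
    (hbot : ∀ p, F p ≠ ⊥) :
    (∀ (x : X) (x' : X →L[ℝ] ℝ), F (x, x') = ((qF A x : ℝ) : EReal) + legendre (qF A) x')
      ↔ (Autoconjugate F ∧ F (0, 0) = 0 ∧ ∀ x y : X, F (x, A y) = F (y, A x)) := by
  constructor
  · intro hF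
    have hFp : ∀ p, F p = Cfun A p := fun p => hF p.1 p.2
    refine ⟨?_, ?_, ?_⟩
    · intro x x'
      have h1 : conj2 F (x', x) = conj2 (Cfun A) (x', x) := by
        unfold conj2
        exact iSup_congr fun q => by rw [hFp q]
      rw [h1, Cfun_autoconj hmono hsym x x', ← hFp (x, x')]
    · rw [hF 0 0, qF_zero, legendre_zero hmono]
      simp
    · intro x y
      rw [hF x (A y), hF y (A x), legendre_A hmono hsym, legendre_A hmono hsym]
      norm_cast
      ring
  · rintro ⟨hauto, hzero, hsymF⟩
    -- first: F is +∞ off the range of A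
    have hFtop : ∀ (x : X) (x' : X →L[ℝ] ℝ), x' ∉ Set.range A → F (x, x') = ⊤ := by
      intro x x' hx'
      obtain ⟨y0, hAy0, hxy0⟩ := exists_y0 hrefl hsym hran hx'
      rw [← hauto x x', EReal.eq_top_iff_forall_lt]
      intro r
      have hF0 : F ((r + 1) • y0, 0) = 0 := by
        have h1 := hsymF ((r + 1) • y0) 0
        rw [map_zero] at h1
        have h2 : A ((r + 1) • y0) = 0 := by rw [map_smul, hAy0, smul_zero]
        rw [h2] at h1
        rw [h1, hzero]
      refine lt_of_lt_of_le ?_ (le_iSup _ (((r + 1) • y0, 0) : X × (X →L[ℝ] ℝ)))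
      simp only [hF0, map_smul, hxy0, ContinuousLinearMap.zero_apply, smul_eq_mul, mul_one,
        add_zero, sub_zero]
      exact_mod_cast lt_add_one r
    -- F ≥ C
    have hge : ∀ p, Cfun A p ≤ F p := by
      rintro ⟨x, x'⟩
      by_cases hx' : x' ∈ Set.range A
      · obtain ⟨y, rfl⟩ := hx'
        have hC : Cfun A (x, A y) = ((qF A x + qF A y : ℝ) : EReal) := by
          rw [Cfun]
          simp only
          rw [legendre_A hmono hsym]
          norm_cast
        rw [hC]
        have hterm : (((A y) y + (A x) x : ℝ) : EReal) - F (y, A x) ≤ conj2 F (A y, x) :=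
          le_iSup (fun q : X × (X →L[ℝ] ℝ) => (((A y) q.1 + q.2 x : ℝ) : EReal) - F q) (y, A x)
        rw [hauto x (A y), hsymF y x] at hterm
        rcases eq_or_ne (F (x, A y)) ⊤ with htop | hne
        · rw [htop]; exact le_top
        · lift F (x, A y) to ℝ using ⟨hne, hbot _⟩ with t ht
          have h1 : ((A y y + A x x - t : ℝ) : EReal) ≤ (t : EReal) := by
            rw [EReal.coe_sub]
            exact hterm
          have h2 : A y y + A x x - t ≤ t := by exact_mod_cast h1
          have h3 : qF A x + qF A y ≤ t := by
            simp only [qF] at *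
            linarith
          exact_mod_cast h3
      · rw [hFtop x x' hx']; exact le_top
    -- F ≤ C by conjugating
    intro x x'
    have hle : F (x, x') ≤ Cfun A (x, x') := by
      rw [← hauto x x', ← Cfun_autoconj hmono hsym x x']
      exact conj2_mono hge (x', x)
    exact le_antisymm hle (hge (x, x'))
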